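/- Let M be a set system over V and X ⊆ V. Then max(M) = max(M∂X), where max(M) is the set system of inclusion-maximal member sets of M and ∂ is the dual pivot operation. -/
import Mathlib


open scoped symmDiff

variable {V : Type} [Fintype V] [DecidableEq V]

/-- pivot (twist) of a set system on `X` -/
def pivotOp (E : Finset (Finset V)) (X : Finset V) : Finset (Finset V) :=
  E.image (fun Y => Y ∆ X)

/-- loop complementation of a set system on `u` -/
def loopC (E : Finset (Finset V)) (u : V) : Finset (Finset V) :=
  E ∆ ((E.filter (fun Y => u ∉ Y)).image (fun Y => insert u Y))

/-- the dual pivot ∂u = +u *u +u -/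
def dualPivot (E : Finset (Finset V)) (u : V) : Finset (Finset V) :=
  loopC (pivotOp (loopC E u) {u}) u
/-- the set system of inclusion-maximal members of E -/
def maxSS (E : Finset (Finset V)) : Finset (Finset V) :=
  E.filter (fun Y => ∀ Z ∈ E, Y ⊆ Z → Y = Z)

lemma mem_pivotOp (E : Finset (Finset V)) (X Y : Finset V) :
    Y ∈ pivotOp E X ↔ Y ∆ X ∈ E := by
  simp only [pivotOp, Finset.mem_image]
  constructor
  · rintro ⟨Z, hZ, rfl⟩; simpa [symmDiff_symmDiff_cancel_right] using hZ
  · intro h; exact ⟨Y ∆ X, h, by simp [symmDiff_symmDiff_cancel_right]⟩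

lemma mem_loopC (E : Finset (Finset V)) (u : V) (Y : Finset V) :
    Y ∈ loopC E u ↔ ¬ (Y ∈ E ↔ u ∈ Y ∧ Y.erase u ∈ E) := by
  have himg : Y ∈ (E.filter (fun Z => u ∉ Z)).image (fun Z => insert u Z) ↔
      u ∈ Y ∧ Y.erase u ∈ E := by
    simp only [Finset.mem_image, Finset.mem_filter]
    constructor
    · rintro ⟨Z, ⟨hZ, hu⟩, rfl⟩
      exact ⟨Finset.mem_insert_self _ _, by rwa [Finset.erase_insert hu]⟩
    · rintro ⟨hu, h⟩
      exact ⟨Y.erase u, ⟨h, Finset.notMem_erase _ _⟩, Finset.insert_erase hu⟩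
  rw [loopC, Finset.mem_symmDiff, himg]
  tauto

lemma symmDiff_singleton_of_mem {Y : Finset V} {u : V} (h : u ∈ Y) :
    Y ∆ ({u} : Finset V) = Y.erase u := by
  ext x
  simp only [Finset.mem_symmDiff, Finset.mem_singleton, Finset.mem_erase]
  constructor
  · rintro (⟨hx, hn⟩ | ⟨rfl, hn⟩)
    · exact ⟨hn, hx⟩
    · exact absurd h hn
  · rintro ⟨hn, hx⟩; exact Or.inl ⟨hx, hn⟩

lemma symmDiff_singleton_of_not_mem {Y : Finset V} {u : V} (h : u ∉ Y) :
    Y ∆ ({u} : Finset V) = insert u Y := by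
  ext x
  simp only [Finset.mem_symmDiff, Finset.mem_singleton, Finset.mem_insert]
  constructor
  · rintro (⟨hx, hn⟩ | ⟨rfl, hn⟩)
    · exact Or.inr hx
    · exact Or.inl rfl
  · rintro (rfl | hx)
    · exact Or.inr ⟨rfl, h⟩
    · exact Or.inl ⟨hx, fun he => h (he ▸ hx)⟩

lemma mem_dualPivot_of_mem {Y : Finset V} {u : V} (h : u ∈ Y) (E : Finset (Finset V)) :
    Y ∈ dualPivot E u ↔ Y ∈ E := by
  have h2 : u ∉ Y.erase u := Finset.notMem_erase _ _
  have hie : insert u (Y.erase u) = Y := Finset.insert_erase h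
  have e1 : Y ∆ ({u} : Finset V) = Y.erase u := symmDiff_singleton_of_mem h
  have e2 : (Y.erase u) ∆ ({u} : Finset V) = Y := by
    rw [symmDiff_singleton_of_not_mem h2, hie]
  simp only [dualPivot, mem_loopC, mem_pivotOp, e1, e2, h, h2, hie,
    Finset.erase_idem, true_and, false_and, not_false_eq_true, iff_true]
  tauto

lemma mem_dualPivot_of_notMem {Y : Finset V} {u : V} (h : u ∉ Y) (E : Finset (Finset V)) :
    Y ∈ dualPivot E u ↔ ¬ (Y ∈ E ↔ insert u Y ∈ E) := by
  have h2 : u ∈ insert u Y := Finset.mem_insert_self _ _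
  have he : (insert u Y).erase u = Y := Finset.erase_insert h
  have e1 : Y ∆ ({u} : Finset V) = insert u Y := symmDiff_singleton_of_not_mem h
  have e2 : (insert u Y) ∆ ({u} : Finset V) = Y := by
    rw [symmDiff_singleton_of_mem h2, he]
  simp only [dualPivot, mem_loopC, mem_pivotOp, e1, e2, h, h2, he,
    Finset.erase_idem, true_and, false_and, not_false_eq_true, iff_true]
  tauto

lemma dualPivot_involutive (E : Finset (Finset V)) (u : V) :
    dualPivot (dualPivot E u) u = E := by
  ext Y
  by_cases h : u ∈ Y
  · rw [mem_dualPivot_of_mem h, mem_dualPivot_of_mem h]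
  · rw [mem_dualPivot_of_notMem h, mem_dualPivot_of_notMem h,
      mem_dualPivot_of_mem (Finset.mem_insert_self u Y)]
    tauto

lemma maxSS_subset_dualPivot (E : Finset (Finset V)) (u : V) :
    maxSS E ⊆ maxSS (dualPivot E u) := by
  intro Y hY
  rw [maxSS, Finset.mem_filter] at hY ⊢
  obtain ⟨hYE, hmax⟩ := hY
  by_cases h : u ∈ Y
  · refine ⟨(mem_dualPivot_of_mem h E).mpr hYE, ?_⟩
    intro Z hZ hYZ
    have huZ : u ∈ Z := hYZ h
    exact hmax Z ((mem_dualPivot_of_mem huZ E).mp hZ) hYZ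
  · have hiY : insert u Y ∉ E := by
      intro hc
      have := hmax _ hc (Finset.subset_insert u Y)
      exact h (this ▸ Finset.mem_insert_self u Y)
    refine ⟨(mem_dualPivot_of_notMem h E).mpr (by tauto), ?_⟩
    intro Z hZ hYZ
    by_cases hu : u ∈ Z
    · exact hmax Z ((mem_dualPivot_of_mem hu E).mp hZ) hYZ
    · rw [mem_dualPivot_of_notMem hu E] at hZ
      by_cases hZE : Z ∈ E
      · exact hmax Z hZE hYZ
      · have : insert u Z ∈ E := by tauto
        have := hmax _ this (hYZ.trans (Finset.subset_insert u Z))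
        exact absurd (this ▸ Finset.mem_insert_self u Z) h

lemma maxSS_dualPivot_one (E : Finset (Finset V)) (u : V) :
    maxSS E = maxSS (dualPivot E u) := by
  refine Finset.Subset.antisymm (maxSS_subset_dualPivot E u) ?_
  have := maxSS_subset_dualPivot (dualPivot E u) u
  rwa [dualPivot_involutive] at this

/-- max(M) = max(M∂X) for any X ⊆ V. -/
theorem maxSS_dualPivot (E : Finset (Finset V)) (X : Finset V)
    (l : List V) (hnd : l.Nodup) (hX : l.toFinset = X) :
    maxSS E = maxSS (l.foldl dualPivot E) := by
  induction l generalizing E X with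
  | nil => rfl
  | cons u t ih =>
    rw [List.foldl_cons, maxSS_dualPivot_one E u]
    exact ih (dualPivot E u) t.toFinset (List.Nodup.of_cons hnd) rfl
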